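/- (HCMS decodability) Let s > 2, n, M satisfy 2^M = (sn+1)2^n. Let P = [Q₁ Q₂ … Q_s] be an (M−n) × sn matrix over F₂ whose columns are exactly all 2^(M−n) − 1 = sn distinct nonzero vectors of F₂^(M−n), partitioned into (M−n)×n blocks with Q₁ + … + Q_s = 0. Suppose the n×n matrix R formed by stacking Q₁,…,Q_{s−1} on top of some matrix T is invertible, and let G₁,…,G_s be a row partition of T. Then the coding matrices [G_i; Q_i] (vertical concatenation), i = 1,…,s, form a syndrome map that is injective on the set of s-terminal Hamming sources of length n. -/

import Mathlib

/-- Hamming weight of a binary vector. -/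
def wt {n : ℕ} (v : Fin n → ZMod 2) : ℕ := (Finset.univ.filter fun j => v j ≠ 0).card

/-- The set of `s`-terminal Hamming sources of length `n`. -/
def hammingS (s n : ℕ) : Set (Fin s → Fin n → ZMod 2) :=
  {x | ∃ (b : Fin n → ZMod 2) (v : Fin s → Fin n → ZMod 2),
    (∀ i, x i = b + v i) ∧ (∑ i, wt (v i)) ≤ 1}

lemma wt_eq_zero_iff {n : ℕ} (v : Fin n → ZMod 2) : wt v = 0 ↔ v = 0 := by
  unfold wt
  rw [Finset.card_eq_zero, Finset.filter_eq_empty_iff]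
  constructor
  · intro h; funext j
    by_contra hj
    exact h (Finset.mem_univ j) hj
  · intro h j _
    simp [h]

lemma zmod2_ne_zero {a : ZMod 2} (h : a ≠ 0) : a = 1 := by revert h; revert a; decide

lemma wt_le_one_struct {s n : ℕ} (v : Fin s → Fin n → ZMod 2) (h : ∑ i, wt (v i) ≤ 1) :
    v = 0 ∨ ∃ p : Fin s × Fin n, v = Pi.single p.1 (Pi.single p.2 1) := by
  by_cases hv : v = 0
  · exact Or.inl hv
  right
  have : ∃ i, v i ≠ 0 := by
    by_contra hc
    push_neg at hc
    exact hv (funext hc)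
  obtain ⟨i, hi⟩ := this
  have : ∃ j, v i j ≠ 0 := by
    by_contra hc
    push_neg at hc
    exact hi (funext hc)
  obtain ⟨j, hj⟩ := this
  refine ⟨(i, j), ?_⟩
  -- other indices are zero
  have hother : ∀ i', i' ≠ i → v i' = 0 := by
    intro i' hi'
    have h1 : 1 ≤ wt (v i) := by
      rw [Nat.one_le_iff_ne_zero]
      intro h0
      exact hj (congrFun ((wt_eq_zero_iff (v i)).1 h0) j)
    have h2 : wt (v i') = 0 := by
      by_contra hne
      have h2' : 1 ≤ wt (v i') := Nat.one_le_iff_ne_zero.2 hne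
      have : 2 ≤ ∑ a, wt (v a) := by
        calc 2 = 1 + 1 := rfl
        _ ≤ wt (v i) + wt (v i') := Nat.add_le_add h1 h2'
        _ = ∑ a ∈ ({i, i'} : Finset (Fin s)), wt (v a) := by
            rw [Finset.sum_pair (Ne.symm hi')]
        _ ≤ ∑ a, wt (v a) := Finset.sum_le_sum_of_subset (Finset.subset_univ _)
      omega
    exact (wt_eq_zero_iff (v i')).1 h2
  have hwi : wt (v i) ≤ 1 := by
    have : wt (v i) ≤ ∑ a, wt (v a) :=
      Finset.single_le_sum (f := fun a => wt (v a)) (fun a _ => Nat.zero_le _) (Finset.mem_univ i)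
    omega
  have hj' : ∀ j', j' ≠ j → v i j' = 0 := by
    intro j' hne
    by_contra hvj'
    have hsub : ({j, j'} : Finset (Fin n)) ⊆ Finset.univ.filter fun a => v i a ≠ 0 := by
      intro a ha
      simp only [Finset.mem_insert, Finset.mem_singleton] at ha
      rcases ha with rfl | rfl <;> simp [hj, hvj']
    have : 2 ≤ wt (v i) := by
      have hcard : ({j, j'} : Finset (Fin n)).card = 2 := by
        rw [Finset.card_pair (Ne.symm hne)]
      calc 2 = ({j, j'} : Finset (Fin n)).card := hcard.symm
      _ ≤ _ := Finset.card_le_card hsub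
    omega
  funext i' j'
  by_cases hii : i' = i
  · subst hii
    by_cases hjj : j' = j
    · subst hjj
      simp [Pi.single_apply, zmod2_ne_zero hj]
    · simp [Pi.single_apply, hjj, hj' j' hjj]
  · simp [Pi.single_apply, hii, hother i' hii]

lemma sum_mulVec {k n : ℕ} {ι : Type*} [Fintype ι] (f : ι → Matrix (Fin k) (Fin n) (ZMod 2))
    (b : Fin n → ZMod 2) : (∑ i, f i).mulVec b = ∑ i, (f i).mulVec b := by
  funext r
  simp only [Matrix.mulVec, dotProduct, Finset.sum_apply, Finset.sum_mul,
    Matrix.sum_apply]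
  rw [Finset.sum_comm]

/-- (HCMS decodability) Let `s > 2`, `n`, `M` satisfy `2^M = (sn+1)2^n` and `k = M − n`.
Let `P = [Q₁ … Q_s]` be a `k × sn` matrix over `F₂` whose columns are distinct and
nonzero (hence, by counting, exactly all `2^k − 1 = sn` nonzero vectors of `F₂^k`),
partitioned into `k×n` blocks with `Q₁ + … + Q_s = 0`.  Suppose the `n×n` matrix `R`
obtained by stacking `Q₁,…,Q_{s−1}` on top of a `t×n` matrix `T` (with `(s−1)k + t = n`)
is invertible, and let `G₁,…,G_s` be the row partition of `T` given by assigning row `j`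
of `T` to terminal `π j`.  Then the coding matrices `[G_i; Q_i]` give a syndrome map
that is injective on the `s`-terminal Hamming sources of length `n`. -/
theorem stmt_13 (s n M k t : ℕ) (hs : 2 < s)
    (hM : 2 ^ M = (s * n + 1) * 2 ^ n) (hk : k = M - n)
    (Q : Fin s → Matrix (Fin k) (Fin n) (ZMod 2))
    (hcols_ne : ∀ (i : Fin s) (j : Fin n), (fun r => Q i r j) ≠ 0)
    (hcols_inj : Function.Injective (fun p : Fin s × Fin n => fun r => Q p.1 r p.2))
    (hsum : ∑ i, Q i = 0)
    (T : Matrix (Fin t) (Fin n) (ZMod 2))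
    (hdim : (s - 1) * k + t = n)
    (hR : Function.Injective (fun b : Fin n → ZMod 2 =>
      ((fun i : Fin (s - 1) => (Q (Fin.castLE (by omega) i)).mulVec b), T.mulVec b)))
    (π : Fin t → Fin s) :
    Set.InjOn
      (fun x : Fin s → Fin n → ZMod 2 => fun i : Fin s =>
        ((fun j : {j : Fin t // π j = i} => T.mulVec (x i) j.1), (Q i).mulVec (x i)))
      (hammingS s n) := by
  intro x hx y hy h
  obtain ⟨b, v, hxv, hv⟩ := hx
  obtain ⟨c, w, hyw, hw⟩ := hy
  have hQ : ∀ i, (Q i).mulVec (x i) = (Q i).mulVec (y i) := fun i =>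
    congrArg Prod.snd (congrFun h i)
  have hT : ∀ j : Fin t, T.mulVec (x (π j)) j = T.mulVec (y (π j)) j := by
    intro j
    have := congrArg Prod.fst (congrFun h (π j))
    exact congrFun this ⟨j, rfl⟩
  -- syndrome sums
  have hsumQ : ∑ i, (Q i).mulVec (v i) = ∑ i, (Q i).mulVec (w i) := by
    have key : ∀ (z : Fin s → Fin n → ZMod 2) (d : Fin n → ZMod 2),
        (∀ i, z i = d + z i - d) → ∑ i, (Q i).mulVec (d + z i) = ∑ i, (Q i).mulVec (z i) := by
      intro z d _
      have : ∑ i, (Q i).mulVec (d + z i) =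
          ∑ i, ((Q i).mulVec d + (Q i).mulVec (z i)) := by
        refine Finset.sum_congr rfl fun i _ => ?_
        rw [Matrix.mulVec_add]
      rw [this, Finset.sum_add_distrib, ← sum_mulVec, hsum, Matrix.zero_mulVec, zero_add]
    have hx' : ∑ i, (Q i).mulVec (x i) = ∑ i, (Q i).mulVec (v i) := by
      have : ∑ i, (Q i).mulVec (x i) = ∑ i, (Q i).mulVec (b + v i) :=
        Finset.sum_congr rfl fun i _ => by rw [hxv i]
      rw [this, key v b (fun i => by ring)]
    have hy' : ∑ i, (Q i).mulVec (y i) = ∑ i, (Q i).mulVec (w i) := by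
      have : ∑ i, (Q i).mulVec (y i) = ∑ i, (Q i).mulVec (c + w i) :=
        Finset.sum_congr rfl fun i _ => by rw [hyw i]
      rw [this, key w c (fun i => by ring)]
    rw [← hx', ← hy']
    exact Finset.sum_congr rfl fun i _ => by rw [hQ i]
  -- value of the sum for a single
  have hsingle : ∀ p : Fin s × Fin n,
      ∑ i, (Q i).mulVec ((Pi.single p.1 (Pi.single p.2 1) : Fin s → Fin n → ZMod 2) i)
        = fun r => Q p.1 r p.2 := by
    intro p
    rw [Finset.sum_eq_single p.1]
    · rw [Pi.single_eq_same, Matrix.mulVec_single]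
      funext r; simp
    · intro i _ hne
      rw [Pi.single_eq_of_ne hne, Matrix.mulVec_zero]
    · intro hmem; exact absurd (Finset.mem_univ _) hmem
  -- conclude v = w
  have hvw : v = w := by
    rcases wt_le_one_struct v hv with hv0 | ⟨p, hp⟩ <;>
      rcases wt_le_one_struct w hw with hw0 | ⟨q, hq⟩
    · rw [hv0, hw0]
    · exfalso
      apply hcols_ne q.1 q.2
      rw [← hsingle q, ← hq, ← hsumQ, hv0]
      simp
    · exfalso
      apply hcols_ne p.1 p.2
      rw [← hsingle p, ← hp, hsumQ, hw0]
      simp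
    · have : (fun r => Q p.1 r p.2) = fun r => Q q.1 r q.2 := by
        rw [← hsingle p, ← hsingle q, ← hp, ← hq, hsumQ]
      have := hcols_inj this
      rw [hp, hq, this]
  -- now show b = c using hR
  have hbc : b = c := by
    apply hR
    refine Prod.ext ?_ ?_
    · funext i
      have hQi := hQ (Fin.castLE (by omega) i)
      set i' := (Fin.castLE (by omega) i : Fin s)
      have : (Q i').mulVec (b + v i') = (Q i').mulVec (c + w i') := by
        rw [← hxv i', ← hyw i', hQi]
      rw [Matrix.mulVec_add, Matrix.mulVec_add, hvw] at this
      exact add_right_cancel this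
    · funext j
      have hTj := hT j
      rw [hxv (π j), hyw (π j), Matrix.mulVec_add, Matrix.mulVec_add, hvw] at hTj
      exact add_right_cancel (show T.mulVec b j + T.mulVec (w (π j)) j =
        T.mulVec c j + T.mulVec (w (π j)) j from hTj)
  funext i
  rw [hxv i, hyw i, hvw, hbc]
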